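/- Let V be a real vector space with a seminorm structure given by three nonnegative quantities a(v), b(v), c(v) (representing the broken gradient norm, the weighted average-flux norm, and the weighted jump norm), and suppose b(v)^2 ≤ C₁ a(v)^2 for all v (a discrete trace/inverse estimate with C₁ > 0). Define the bilinear-form lower bound: if A(v,v) = a(v)^2 - (1+δ) s(v) + α c(v)^2 where |s(v)| ≤ ε C₁ a(v)^2 + (1/(4ε)) c(v)^2 for every ε > 0, then for any 0 < C < 1 and any α ≥ (1+δ)²C₁ / (4(1-C)²), one has A(v,v) ≥ C (a(v)^2 + α c(v)^2) ≥ (C/(1+C₁)) (a(v)^2 + b(v)^2 + α c(v)^2). -/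

import Mathlib

/-- Coercivity lower bound for the IPDG bilinear form, in abstract seminorm form. -/
theorem ipdg_coercivity {V : Type*} [AddCommGroup V] [Module ℝ V]
    (a b c s Avv : V → ℝ) (C₁ δ α C : ℝ)
    (hC₁ : 0 < C₁) (hα : 0 < α)
    (hδ : δ = -1 ∨ δ = 0 ∨ δ = 1)
    (ha : ∀ v, 0 ≤ a v) (hb : ∀ v, 0 ≤ b v) (hc : ∀ v, 0 ≤ c v)
    (htrace : ∀ v, (b v) ^ 2 ≤ C₁ * (a v) ^ 2)
    (hs : ∀ v, ∀ ε > (0 : ℝ), |s v| ≤ ε * C₁ * (a v) ^ 2 + (1 / (4 * ε)) * (c v) ^ 2)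
    (hA : ∀ v, Avv v = (a v) ^ 2 - (1 + δ) * s v + α * (c v) ^ 2)
    (hC : 0 < C) (hC1 : C < 1)
    (hαbig : (1 + δ) ^ 2 * C₁ / (4 * (1 - C) ^ 2) ≤ α) :
    ∀ v, C * ((a v) ^ 2 + α * (c v) ^ 2) ≤ Avv v ∧
      (C / (1 + C₁)) * ((a v) ^ 2 + (b v) ^ 2 + α * (c v) ^ 2)
        ≤ C * ((a v) ^ 2 + α * (c v) ^ 2) := by
  intro v
  constructor
  · rcases eq_or_lt_of_le (show (0:ℝ) ≤ 1 + δ by rcases hδ with h|h|h <;> simp [h]) with hd | hd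
    · -- 1 + δ = 0
      rw [hA v, ← hd]
      nlinarith [sq_nonneg (a v), mul_nonneg hα.le (sq_nonneg (c v))]
    · set ε : ℝ := (1 - C) / ((1 + δ) * C₁) with hε
      have hεpos : 0 < ε := div_pos (by linarith) (mul_pos hd hC₁)
      have hsv : s v ≤ ε * C₁ * (a v) ^ 2 + (1 / (4 * ε)) * (c v) ^ 2 :=
        (le_abs_self _).trans (hs v ε hεpos)
      have f1 : (1 + δ) * (ε * C₁) = 1 - C := by
        rw [hε]; field_simp
      have h4ε : 1 / (4 * ε) = (1 + δ) * C₁ / (4 * (1 - C)) := by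
        rw [hε]; field_simp
      have hαbig' : (1 + δ) ^ 2 * C₁ ≤ α * (4 * (1 - C) ^ 2) := by
        rwa [div_le_iff₀ (by nlinarith)] at hαbig
      have f2 : (1 + δ) * (1 / (4 * ε)) ≤ (1 - C) * α := by
        rw [h4ε, mul_div_assoc', div_le_iff₀ (by linarith : (0:ℝ) < 4 * (1 - C))]
        nlinarith
      have hmul := mul_le_mul_of_nonneg_left hsv hd.le
      have hmul2 := mul_le_mul_of_nonneg_right f2 (sq_nonneg (c v))
      rw [hA v]
      nlinarith [sq_nonneg (a v), sq_nonneg (c v),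
        mul_le_mul_of_nonneg_right f1.le (sq_nonneg (a v))]
  · rw [div_mul_eq_mul_div, div_le_iff₀ (by linarith : (0:ℝ) < 1 + C₁)]
    nlinarith [mul_le_mul_of_nonneg_left (htrace v) hC.le,
      mul_nonneg (mul_nonneg hC.le hC₁.le) (mul_nonneg hα.le (sq_nonneg (c v)))]
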